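/- Let A be a finite alphabet and L ⊆ A* a factorial language. Suppose there exists a positive integer k such that infinitely many words of L contain no occurrence of a k-th power of a nonempty word. Then there exists an infinite sequence y ∈ A^ℕ with bounded word powers (i.e., there is a positive integer k' such that u^{k'} is a factor of y only if u is empty) such that every factor of y belongs to L. -/

import Mathlib

/-- `u` is a factor (contiguous subword) of `w`. -/
def Fac {α : Type*} (u w : List α) : Prop := ∃ s t : List α, w = s ++ u ++ t

/-- `k`-th power of a word. -/
def listPow {α : Type*} (u : List α) (k : ℕ) : List α := (List.replicate k u).flatten

/-- The window of length `n` of the sequence `y` starting at position `m`. -/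
def window {α : Type*} (y : ℕ → α) (m n : ℕ) : List α := List.ofFn fun i : Fin n => y (m + i)

/-- `u` is a finite factor of the infinite sequence `y`. -/
def FacSeq {α : Type*} (u : List α) (y : ℕ → α) : Prop := ∃ m n : ℕ, u = window y m n

theorem stmt1 {A : Type*} [Fintype A] (L : Set (List A))
    (hfact : ∀ u w : List A, w ∈ L → Fac u w → u ∈ L)
    (h : ∃ k : ℕ, 0 < k ∧
      {w ∈ L | ∀ u : List A, u ≠ [] → ¬ Fac (listPow u k) w}.Infinite) :
    ∃ y : ℕ → A,
      (∃ k' : ℕ, 0 < k' ∧ ∀ u : List A, u ≠ [] → ¬ FacSeq (listPow u k') y) ∧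
      ∀ u : List A, FacSeq u y → u ∈ L := by
  classical
  obtain ⟨k, hk, hinf⟩ := h
  set S : Set (List A) := {w ∈ L | ∀ u : List A, u ≠ [] → ¬ Fac (listPow u k) w} with hSdef
  have facTrans : ∀ a b c : List A, Fac a b → Fac b c → Fac a c := by
    rintro a b c ⟨s, t, rfl⟩ ⟨s', t', rfl⟩
    exact ⟨s' ++ s, t ++ t', by simp⟩
  have hSfac : ∀ u w, w ∈ S → Fac u w → u ∈ S := by
    rintro u w ⟨hwL, hwp⟩ huw
    exact ⟨hfact u w hwL huw, fun v hv hf => hwp v hv (facTrans _ _ _ hf huw)⟩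
  set P : List A → Prop := fun w => {v ∈ S | w <+: v}.Infinite with hPdef
  have hP0 : P [] := by
    have he : {v ∈ S | [] <+: v} = S := by ext v; simp
    rw [hPdef]; simpa [he] using hinf
  have hPS : ∀ w, P w → w ∈ S := by
    intro w hw
    obtain ⟨v, hvS, t, rfl⟩ := hw.nonempty
    exact hSfac w _ hvS ⟨[], t, by simp⟩
  have hstep : ∀ w, P w → ∃ a : A, P (w ++ [a]) := by
    intro w hw
    by_contra hcon
    push_neg at hcon
    simp only [hPdef, Set.not_infinite] at hcon
    have hfin : ({v : List A | v.length ≤ w.length} ∪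
        ⋃ a : A, {v ∈ S | w ++ [a] <+: v}).Finite :=
      (List.finite_length_le A w.length).union (Set.finite_iUnion hcon)
    refine hw (hfin.subset ?_)
    rintro v ⟨hvS, t, rfl⟩
    rcases t with _ | ⟨a, t'⟩
    · left; simp
    · right
      exact Set.mem_iUnion.2 ⟨a, hvS, ⟨t', by simp⟩⟩
  let step : {w : List A // P w} → {w : List A // P w} :=
    fun p => ⟨p.1 ++ [Classical.choose (hstep p.1 p.2)], Classical.choose_spec (hstep p.1 p.2)⟩
  let g : ℕ → {w : List A // P w} := fun n => step^[n] ⟨[], hP0⟩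
  let y : ℕ → A := fun n => Classical.choose (hstep (g n).1 (g n).2)
  have hgsucc : ∀ n, (g (n+1)).1 = (g n).1 ++ [y n] := by
    intro n
    show (step^[n+1] _).1 = _
    rw [Function.iterate_succ_apply']
  have hwin0 : ∀ n, window y 0 n = (g n).1 := by
    intro n
    induction n with
    | zero => simp [window, g]
    | succ n ih =>
      rw [hgsucc, ← ih]
      simp only [window, List.ofFn_succ', List.concat_eq_append]
      congr 1
      all_goals first
        | simp
        | (congr 1; funext i; simp)
  have hsplit : ∀ m n, window y 0 (m + n) = window y 0 m ++ window y m n := by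
    intro m n
    simp only [window, List.ofFn_add]
    congr 1
    all_goals first
      | simp
      | (congr 1; funext i; simp [Fin.natAdd])
  have hfacS : ∀ u, FacSeq u y → u ∈ S := by
    rintro u ⟨m, n, rfl⟩
    apply hSfac _ ((g (m+n)).1) (hPS _ (g (m+n)).2)
    rw [← hwin0, hsplit]
    exact ⟨window y 0 m, [], by simp⟩
  refine ⟨y, ⟨k, hk, fun u hu hfs => ?_⟩, fun u hu => (hfacS u hu).1⟩
  exact (hfacS _ hfs).2 u hu ⟨[], [], by simp⟩
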